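/- Let S be a finite nonempty alphabet, n ≥ 1, F = {f_i : ℝⁿ → ℝⁿ}_{i∈S} a family of continuous maps, and C a covering family of languages over S. If there exists a C-memory-based Lyapunov function W : C × ℝⁿ → ℝ for F, then the switched system x(k+1) = f_{σ(k)}(x(k)) is uniformly globally asymptotically stable (UGAS). -/

import Mathlib

open Filter Topology NNReal

def IsClassKInf (α : ℝ≥0 → ℝ≥0) : Prop :=
  Continuous α ∧ α 0 = 0 ∧ StrictMono α ∧ ∀ M : ℝ≥0, ∃ r, M ≤ α r

def IsClassKL (β : ℝ≥0 → ℝ≥0 → ℝ≥0) : Prop :=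
  Continuous (fun p : ℝ≥0 × ℝ≥0 => β p.1 p.2) ∧
  (∀ t, Continuous (fun r => β r t) ∧ β 0 t = 0 ∧ StrictMono (fun r => β r t)) ∧
  (∀ r, Antitone (β r) ∧ Tendsto (β r) atTop (𝓝 0))

def PathComplete {N S : Type*} (E : Set (N × N × S)) : Prop :=
  ∀ K : ℕ, 1 ≤ K → ∀ j : Fin K → S, ∃ a : Fin (K + 1) → N,
    ∀ k : Fin K, (a k.castSucc, a k.succ, j k) ∈ E

def sol {n : ℕ} {S : Type*} (f : S → EuclideanSpace ℝ (Fin n) → EuclideanSpace ℝ (Fin n))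
    (σ : ℕ → S) (x0 : EuclideanSpace ℝ (Fin n)) : ℕ → EuclideanSpace ℝ (Fin n)
  | 0 => x0
  | k + 1 => f (σ k) (sol f σ x0 k)

def UGAS {n : ℕ} {S : Type*}
    (f : S → EuclideanSpace ℝ (Fin n) → EuclideanSpace ℝ (Fin n)) : Prop :=
  ∃ β : ℝ≥0 → ℝ≥0 → ℝ≥0, IsClassKL β ∧
    ∀ (σ : ℕ → S) (x0 : EuclideanSpace ℝ (Fin n)) (k : ℕ),
      ‖sol f σ x0 k‖₊ ≤ β ‖x0‖₊ (k : ℝ≥0)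

def IsPCLF {n : ℕ} {S N : Type*} (E : Set (N × N × S))
    (f : S → EuclideanSpace ℝ (Fin n) → EuclideanSpace ℝ (Fin n))
    (V : N → EuclideanSpace ℝ (Fin n) → ℝ) : Prop :=
  PathComplete E ∧ (∀ s, Continuous (V s)) ∧
  ∃ (α₁ α₂ : ℝ≥0 → ℝ≥0) (γ : ℝ≥0), IsClassKInf α₁ ∧ IsClassKInf α₂ ∧ γ < 1 ∧
    (∀ s x, (α₁ ‖x‖₊ : ℝ) ≤ V s x ∧ V s x ≤ (α₂ ‖x‖₊ : ℝ)) ∧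
    (∀ a b i, (a, b, i) ∈ E → ∀ x, V b (f i x) ≤ (γ : ℝ) * V a x)

def IsCoveringFamily {S : Type*} (C : Finset (Set (List S))) : Prop :=
  (∀ B ∈ C, Language.IsRegular (B : Language S)) ∧
  (⋃ B ∈ C, B) = Set.univ ∧
  ∀ B ∈ C, ∀ h : S, ∃ C' ∈ C, (fun w => h :: w) '' B ⊆ C'

def IsMBLF {n : ℕ} {S : Type*} (C : Finset (Set (List S)))
    (f : S → EuclideanSpace ℝ (Fin n) → EuclideanSpace ℝ (Fin n))
    (W : {B // B ∈ C} → EuclideanSpace ℝ (Fin n) → ℝ) : Prop :=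
  (∀ B, Continuous (W B)) ∧
  ∃ (α₁ α₂ : ℝ≥0 → ℝ≥0) (γ : ℝ≥0), IsClassKInf α₁ ∧ IsClassKInf α₂ ∧ γ < 1 ∧
    (∀ B x, (α₁ ‖x‖₊ : ℝ) ≤ W B x ∧ W B x ≤ (α₂ ‖x‖₊ : ℝ)) ∧
    (∀ (B C' : {B // B ∈ C}) (h : S),
      (fun w => h :: w) '' (B : Set (List S)) ⊆ (C' : Set (List S)) →
      ∀ x, W C' (f h x) ≤ (γ : ℝ) * W B x)

def prefixClass {S : Type*} (i : List S) : Set (List S) := {w | w <+: i ∨ i <+: w}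

/-- Auxiliary: the sequence of memories along a switching signal. -/
def mblfSeq {S : Type} {C : Finset (Set (List S))}
    (g : {B // B ∈ C} → S → {B // B ∈ C}) (b0 : {B // B ∈ C})
    (σ : ℕ → S) : ℕ → {B // B ∈ C}
  | 0 => b0
  | k + 1 => g (mblfSeq g b0 σ k) (σ k)

/-- Auxiliary: continuity of `t ↦ c ^ (t : ℝ)` on `ℝ≥0` for a nonzero base. -/
lemma continuous_nnrpow_coe {c : ℝ≥0} (h0 : 0 < c) :
    Continuous (fun t : ℝ≥0 => c ^ (t : ℝ)) := by
  rw [continuous_iff_continuousAt]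
  intro t
  have hg : Continuous (fun t : ℝ≥0 => ((c, (t : ℝ)) : ℝ≥0 × ℝ)) :=
    continuous_const.prodMk NNReal.continuous_coe
  have h1 : ContinuousAt (fun p : ℝ≥0 × ℝ => p.1 ^ p.2) (c, (t : ℝ)) :=
    NNReal.continuousAt_rpow (Or.inl h0.ne')
  show ContinuousAt ((fun p : ℝ≥0 × ℝ => p.1 ^ p.2) ∘ (fun t : ℝ≥0 => (c, (t : ℝ)))) t
  exact ContinuousAt.comp (x := t) h1 hg.continuousAt

/-- existence of a memory-based Lyapunov function implies UGAS. -/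
theorem mblf_implies_ugas {S : Type} [Fintype S] [Nonempty S]
    (n : ℕ) (hn : 1 ≤ n)
    (f : S → EuclideanSpace ℝ (Fin n) → EuclideanSpace ℝ (Fin n))
    (hf : ∀ i, Continuous (f i))
    (C : Finset (Set (List S))) (hC : IsCoveringFamily C)
    (W : {B // B ∈ C} → EuclideanSpace ℝ (Fin n) → ℝ)
    (hW : IsMBLF C f W) : UGAS f := by
  obtain ⟨hWc, α₁, α₂, γ, h₁, h₂, hγ, hbound, hdec⟩ := hW
  -- inverse of α₁ as an order isomorphism
  have hsurj : Function.Surjective α₁ := by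
    intro y
    obtain ⟨r, hr⟩ := h₁.2.2.2 y
    have hy : y ∈ Set.Icc (α₁ 0) (α₁ r) := ⟨by rw [h₁.2.1]; exact zero_le, hr⟩
    obtain ⟨x, _, hx⟩ := intermediate_value_Icc (zero_le : (0 : ℝ≥0) ≤ r) h₁.1.continuousOn hy
    exact ⟨x, hx⟩
  set e : ℝ≥0 ≃o ℝ≥0 := StrictMono.orderIsoOfSurjective α₁ h₁.2.2.1 hsurj with he_def
  have he : (e : ℝ≥0 → ℝ≥0) = α₁ :=
    StrictMono.coe_orderIsoOfSurjective α₁ h₁.2.2.1 hsurj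
  have he0 : e.symm 0 = 0 := by
    have h0 : e 0 = 0 := by rw [show (e : ℝ≥0 → ℝ≥0) 0 = α₁ 0 from congrFun he 0, h₁.2.1]
    conv_lhs => rw [← h0, OrderIso.symm_apply_apply]
  -- the modified contraction rate
  set γ' : ℝ≥0 := max γ (1/2) with hγ'_def
  have hγ'0 : 0 < γ' := lt_of_lt_of_le (by norm_num) (le_max_right _ _)
  have hγ'1 : γ' < 1 := max_lt hγ (by rw [← NNReal.coe_lt_coe]; norm_num)
  have hγγ' : γ ≤ γ' := le_max_left _ _
  -- the KL function
  refine ⟨fun r t => e.symm (α₂ r * γ' ^ (t : ℝ)), ⟨?_, ?_, ?_⟩, ?_⟩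
  · -- joint continuity
    exact e.symm.continuous.comp
      ((h₂.1.comp continuous_fst).mul ((continuous_nnrpow_coe hγ'0).comp continuous_snd))
  · -- class K in the first argument
    intro t
    refine ⟨e.symm.continuous.comp (h₂.1.mul continuous_const), ?_, ?_⟩
    · show e.symm (α₂ 0 * γ' ^ (t : ℝ)) = 0
      rw [h₂.2.1, zero_mul, he0]
    · intro a b hab
      exact e.symm.strictMono
        (mul_lt_mul_of_pos_right (h₂.2.2.1 hab) (NNReal.rpow_pos hγ'0))
  · -- decreasing to zero in the second argument
    intro r
    constructor
    · intro s t hst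
      refine e.symm.monotone (mul_le_mul_right ?_ _)
      exact NNReal.rpow_le_rpow_of_exponent_ge hγ'0 hγ'1.le (NNReal.coe_le_coe.mpr hst)
    · have hpow : Tendsto (fun t : ℝ≥0 => γ' ^ (t : ℝ)) atTop (𝓝 0) := by
        have hr : Tendsto (fun x : ℝ => (γ' : ℝ) ^ x) atTop (𝓝 0) :=
          tendsto_rpow_atTop_of_base_lt_one _ (by linarith [γ'.coe_nonneg]) hγ'1
        rw [← NNReal.tendsto_coe]
        exact hr.comp (NNReal.tendsto_coe_atTop.mpr tendsto_id)
      have hmul : Tendsto (fun t : ℝ≥0 => α₂ r * γ' ^ (t : ℝ)) atTop (𝓝 0) := by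
        have := tendsto_const_nhds.mul hpow (f := fun _ : ℝ≥0 => α₂ r) (x := atTop)
        rwa [mul_zero] at this
      have := (e.symm.continuous.tendsto 0).comp hmul
      rwa [he0] at this
  -- the trajectory bound
  · intro σ x0 k
    -- construct the memory sequence
    choose g hgmem hgsub using fun (b : {B // B ∈ C}) (h : S) => hC.2.2 b b.2 h
    have hCne : ∃ B, B ∈ C := by
      have : ([] : List S) ∈ (⋃ B ∈ C, B) := hC.2.1 ▸ Set.mem_univ _
      obtain ⟨B, hB, -⟩ := Set.mem_iUnion₂.mp this
      exact ⟨B, hB⟩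
    obtain ⟨B0, hB0⟩ := hCne
    set g' : {B // B ∈ C} → S → {B // B ∈ C} := fun b h => ⟨g b h, hgmem b h⟩ with hg'_def
    set Bs : ℕ → {B // B ∈ C} := mblfSeq g' ⟨B0, hB0⟩ σ with hBs_def
    -- key decay estimate
    have key : ∀ k, W (Bs k) (sol f σ x0 k) ≤ (γ : ℝ) ^ k * (α₂ ‖x0‖₊ : ℝ) := by
      intro k
      induction k with
      | zero => simpa [Bs, mblfSeq, sol] using (hbound (⟨B0, hB0⟩ : {B // B ∈ C}) x0).2
      | succ k ih =>
        have hstep : W (Bs (k+1)) (sol f σ x0 (k+1)) ≤ (γ : ℝ) * W (Bs k) (sol f σ x0 k) := by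
          have hsub : (fun w => σ k :: w) '' ((Bs k : Set (List S))) ⊆ (Bs (k+1) : Set (List S)) :=
            hgsub (Bs k) (σ k)
          exact hdec (Bs k) (Bs (k+1)) (σ k) hsub (sol f σ x0 k)
        calc W (Bs (k+1)) (sol f σ x0 (k+1)) ≤ (γ : ℝ) * W (Bs k) (sol f σ x0 k) := hstep
          _ ≤ (γ : ℝ) * ((γ : ℝ) ^ k * (α₂ ‖x0‖₊ : ℝ)) :=
              mul_le_mul_of_nonneg_left ih γ.coe_nonneg
          _ = (γ : ℝ) ^ (k+1) * (α₂ ‖x0‖₊ : ℝ) := by ring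
    -- pass to ℝ≥0
    have hreal : (α₁ ‖sol f σ x0 k‖₊ : ℝ) ≤ ((γ' ^ k * α₂ ‖x0‖₊ : ℝ≥0) : ℝ) := by
      have h1 : (α₁ ‖sol f σ x0 k‖₊ : ℝ) ≤ (γ : ℝ) ^ k * (α₂ ‖x0‖₊ : ℝ) :=
        le_trans (hbound (Bs k) (sol f σ x0 k)).1 (key k)
      have h2 : (γ : ℝ) ^ k * (α₂ ‖x0‖₊ : ℝ) ≤ (γ' : ℝ) ^ k * (α₂ ‖x0‖₊ : ℝ) := by
        apply mul_le_mul_of_nonneg_right _ (α₂ ‖x0‖₊).coe_nonneg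
        exact pow_le_pow_left₀ γ.coe_nonneg (NNReal.coe_le_coe.mpr hγγ') k
      push_cast
      linarith
    have hnn : α₁ ‖sol f σ x0 k‖₊ ≤ γ' ^ k * α₂ ‖x0‖₊ := NNReal.coe_le_coe.mp hreal
    -- conclude via the inverse
    have hrpow : γ' ^ (((k : ℝ≥0) : ℝ)) = γ' ^ k := by
      rw [show (((k : ℝ≥0)) : ℝ) = (k : ℝ) by push_cast; ring, NNReal.rpow_natCast]
    show ‖sol f σ x0 k‖₊ ≤ e.symm (α₂ ‖x0‖₊ * γ' ^ (((k : ℝ≥0)) : ℝ))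
    rw [hrpow, mul_comm]
    calc ‖sol f σ x0 k‖₊ = e.symm (e ‖sol f σ x0 k‖₊) := (e.symm_apply_apply _).symm
      _ = e.symm (α₁ ‖sol f σ x0 k‖₊) := by rw [congrFun he _]
      _ ≤ e.symm (γ' ^ k * α₂ ‖x0‖₊) := e.symm.monotone hnn
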